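/- Let (λ_k)_{k∈ℕ} be a sequence of complex numbers with no accumulation point such that Re λ_k ≥ δ for all k ∈ ℕ, for some δ > 0, such that ∑_{k=1}^∞ [1 − |(λ_k − 1)/(λ_k + 1)|] < +∞ and |arg(λ_k)| ≤ θ for all k ∈ ℕ, for some θ ∈ (0, π/2). Then (λ_k)_{k∈ℕ} is NOT a uniqueness sequence for the (one-dimensional) Laplace transform. -/

import Mathlib

open MeasureTheory Filter Set

noncomputable section

/-- Partial Laplace integral of `f : [0,∞) → ℂ` at `l` up to time `t`. -/
def lapPartial (f : ℝ → ℂ) (l : ℂ) (t : ℝ) : ℂ :=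
  ∫ s in Set.Ioc (0:ℝ) t, Complex.exp (-(l * s)) * f s

/-- The Laplace transform of `f` at `l` exists and equals `F`. -/
def HasLaplace (f : ℝ → ℂ) (l : ℂ) (F : ℂ) : Prop :=
  Filter.Tendsto (lapPartial f l) Filter.atTop (nhds F)

/-- The abscissa of convergence of the Laplace transform of `f`, as an extended real. -/
def laplaceAbs (f : ℝ → ℂ) : EReal :=
  sInf {x : EReal | ∃ ω : ℝ, x = (ω : EReal) ∧ ∀ l : ℂ, ω < l.re → ∃ F, HasLaplace f l F}

/-- `lam` is a uniqueness sequence for the one-dimensional Laplace transform. -/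
def IsUniquenessSeq (lam : ℕ → ℂ) : Prop :=
  ∀ f : ℝ → ℂ, MeasureTheory.LocallyIntegrableOn f (Set.Ici 0) →
    (∀ k, laplaceAbs f < (((lam k).re : ℝ) : EReal)) →
    (∀ k, HasLaplace f (lam k) 0) →
    ∀ᵐ t : ℝ, 0 ≤ t → f t = 0

/-- Partial `n`-dimensional Laplace integral of `f : [0,∞)^n → ℂ` at `l` over the box `[0,t]`. -/
def mLapPartial (n : ℕ) (f : (Fin n → ℝ) → ℂ) (l : Fin n → ℂ) (t : Fin n → ℝ) : ℂ :=
  ∫ s in Set.pi Set.univ (fun i => Set.Ioc (0:ℝ) (t i)),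
    Complex.exp (-(∑ i, l i * (s i))) * f s

/-- The `n`-dimensional Laplace transform of `f` at `l` exists (as the iterated limit
`t₁ → ∞, …, tₙ → ∞` of the partial integrals) and equals `F`. -/
def HasMLaplace (n : ℕ) (f : (Fin n → ℝ) → ℂ) (l : Fin n → ℂ) (F : ℂ) : Prop :=
  Filter.Tendsto (mLapPartial n f l) Filter.atTop (nhds F)

/-- `Ω(f)`: the region of convergence of the `n`-dimensional Laplace integral. -/
def mOmega (n : ℕ) (f : (Fin n → ℝ) → ℂ) : Set (Fin n → ℂ) :=
  {l | ∃ F, HasMLaplace n f l F}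

/-- `Ω_b(f)`: the set of `l` for which the partial Laplace integrals are bounded. -/
def mOmegaB (n : ℕ) (f : (Fin n → ℝ) → ℂ) : Set (Fin n → ℂ) :=
  {l | Bornology.IsBounded (mLapPartial n f l '' {t | ∀ i, 0 ≤ t i})}

/-- A countable family `lam : K → ℂⁿ` is a uniqueness sequence for the `n`-dimensional
Laplace transform. -/
def IsMUniquenessFamily (n : ℕ) {K : Type} [Countable K] (lam : K → Fin n → ℂ) : Prop :=
  ∀ f : (Fin n → ℝ) → ℂ,
    MeasureTheory.LocallyIntegrableOn f {t | ∀ i, 0 ≤ t i} →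
    (∃ ω : Fin n → EReal, (∀ j, ω j ≠ ⊤) ∧
      {l : Fin n → ℂ | ∀ j, ω j < (((l j).re : ℝ) : EReal)} ⊆ mOmegaB n f ∩ mOmega n f ∧
      ∀ k j, ω j < ((((lam k j).re : ℝ)) : EReal)) →
    (∀ k, HasMLaplace n f (lam k) 0) →
    ∀ᵐ t : Fin n → ℝ, (∀ i, 0 ≤ t i) → f t = 0


section StmtAux
open Complex Topology FourierTransform

namespace LapAux

variable (G : ℂ → ℂ)

def lineInt (c t : ℝ) : ℂ := ∫ u : ℝ, G (c + u * I) * Complex.exp ((c + u * I) * t)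

lemma re_line (c u : ℝ) : (↑c + ↑u * I).re = c := by simp
lemma im_line (c u : ℝ) : (↑c + ↑u * I).im = u := by simp

variable {G}

lemma norm_integrand_le {c : ℝ} (hc : 0 ≤ c)
    (hGb : ∀ z : ℂ, 0 ≤ z.re → ‖G z‖ ≤ (1 + z.im ^ 2)⁻¹) (t u : ℝ) :
    ‖G (c + u * I) * Complex.exp ((c + u * I) * t)‖ ≤ (1 + u ^ 2)⁻¹ * Real.exp (c * t) := by
  rw [norm_mul, Complex.norm_exp]
  have h1 : ((↑c + ↑u * I) * ↑t).re = c * t := by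
    rw [Complex.mul_re]; simp
  rw [h1]
  have := hGb (c + u * I) (by simp [hc])
  simp only [im_line] at this
  exact mul_le_mul_of_nonneg_right this (Real.exp_nonneg _)

lemma cont_comp (hGd : DifferentiableOn ℂ G {z | 0 < z.re}) {c : ℝ} (hc : 0 < c) :
    Continuous fun u : ℝ => G (c + u * I) := by
  have hcont : ContinuousOn G {z : ℂ | 0 < z.re} := hGd.continuousOn
  have hmap : Continuous fun u : ℝ => (↑c + ↑u * I : ℂ) := by continuity
  exact hcont.comp_continuous hmap (fun u => by simp [hc])

lemma integrand_integrable (hGd : DifferentiableOn ℂ G {z | 0 < z.re})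
    (hGb : ∀ z : ℂ, 0 ≤ z.re → ‖G z‖ ≤ (1 + z.im ^ 2)⁻¹) {c : ℝ} (hc : 0 < c) (t : ℝ) :
    Integrable fun u : ℝ => G (c + u * I) * Complex.exp ((c + u * I) * t) := by
  have hbound : ∀ u : ℝ, ‖G (c + u * I) * Complex.exp ((c + u * I) * t)‖ ≤
      Real.exp (c * t) * (1 + u ^ 2)⁻¹ := by
    intro u
    rw [mul_comm (Real.exp (c*t))]
    exact norm_integrand_le hc.le hGb t u
  refine Integrable.mono' (integrable_inv_one_add_sq.const_mul (Real.exp (c * t))) ?_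
    (Filter.Eventually.of_forall hbound)
  exact ((cont_comp hGd hc).mul (by continuity)).aestronglyMeasurable

lemma norm_lineInt_le (hGd : DifferentiableOn ℂ G {z | 0 < z.re})
    (hGb : ∀ z : ℂ, 0 ≤ z.re → ‖G z‖ ≤ (1 + z.im ^ 2)⁻¹) {c : ℝ} (hc : 0 < c) (t : ℝ) :
    ‖lineInt G c t‖ ≤ Real.pi * Real.exp (c * t) := by
  have h : ‖∫ u : ℝ, G (c + u * I) * Complex.exp ((c + u * I) * t)‖ ≤
      ∫ u : ℝ, (1 + u ^ 2)⁻¹ * Real.exp (c * t) :=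
    norm_integral_le_of_norm_le ((integrable_inv_one_add_sq.mul_const (Real.exp (c * t))))
      (Filter.Eventually.of_forall (fun u => norm_integrand_le hc.le hGb t u))
  calc ‖lineInt G c t‖ ≤ ∫ u : ℝ, (1 + u ^ 2)⁻¹ * Real.exp (c * t) := h
    _ = (∫ u : ℝ, (1 + u ^ 2)⁻¹) * Real.exp (c * t) := by
        rw [MeasureTheory.integral_mul_const]
    _ = Real.pi * Real.exp (c * t) := by rw [integral_univ_inv_one_add_sq]

lemma lineInt_indep (hGd : DifferentiableOn ℂ G {z | 0 < z.re})
    (hGb : ∀ z : ℂ, 0 ≤ z.re → ‖G z‖ ≤ (1 + z.im ^ 2)⁻¹)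
    {c c' : ℝ} (hc : 0 < c) (hcc : c ≤ c') (t : ℝ) :
    (∫ u : ℝ, G (c + u * I) * Complex.exp ((c + u * I) * t)) =
      ∫ u : ℝ, G (c' + u * I) * Complex.exp ((c' + u * I) * t) := by
  set Ψ : ℂ → ℂ := fun z => G z * Complex.exp (z * t) with hΨ
  have hc' : 0 < c' := lt_of_lt_of_le hc hcc
  have hΨd : DifferentiableOn ℂ Ψ {z : ℂ | 0 < z.re} :=
    hGd.mul ((Complex.differentiable_exp.comp (differentiable_id.mul_const _)).differentiableOn)
  -- rectangle identity
  have hrect : ∀ T : ℝ,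
      ((∫ x in c..c', Ψ (x + (-T) * I)) - (∫ x in c..c', Ψ (x + T * I)))
        + (I • (∫ y in (-T)..T, Ψ (c' + y * I)) - I • (∫ y in (-T)..T, Ψ (c + y * I))) = 0 := by
    intro T
    have h := Complex.integral_boundary_rect_eq_zero_of_differentiableOn Ψ
      (↑c + ↑(-T) * I) (↑c' + ↑T * I) ?_
    · have e1 : (↑c + ↑(-T) * I : ℂ).re = c := by simp
      have e2 : (↑c' + ↑T * I : ℂ).re = c' := by simp
      have e3 : (↑c + ↑(-T) * I : ℂ).im = -T := by simp
      have e4 : (↑c' + ↑T * I : ℂ).im = T := by simp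
      rw [e1, e2, e3, e4] at h
      have := h
      push_cast at this ⊢
      linear_combination this
    · refine hΨd.mono ?_
      intro z hz
      rw [Complex.mem_reProdIm] at hz
      have hz1 := hz.1
      rw [Complex.add_re, Complex.add_re, Complex.ofReal_re, Complex.ofReal_re] at hz1
      simp only [Complex.mul_re, Complex.ofReal_im, Complex.I_re, Complex.I_im] at hz1
      have : z.re ∈ uIcc c c' := by simpa using hz1
      rw [Set.uIcc_of_le hcc] at this
      exact lt_of_lt_of_le hc this.1
  -- vertical limits
  have hvert : ∀ a : ℝ, 0 < a → Tendsto (fun T : ℝ => ∫ y in (-T)..T, Ψ (a + y * I)) atTop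
      (𝓝 (∫ u : ℝ, G (a + u * I) * Complex.exp ((a + u * I) * t))) := by
    intro a ha
    have hint : Integrable fun u : ℝ => G (a + u * I) * Complex.exp ((a + u * I) * t) :=
      integrand_integrable hGd hGb ha t
    exact intervalIntegral_tendsto_integral hint tendsto_neg_atTop_atBot tendsto_id
  set K : ℝ := Real.exp (c * t) + Real.exp (c' * t) with hKdef
  have hbnd : ∀ T b : ℝ, b ^ 2 = T ^ 2 →
      ‖∫ x in c..c', Ψ (x + b * I)‖ ≤ (1 + T ^ 2)⁻¹ * K * |c' - c| := by
    intro T b hb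
    have h1 : ∀ x ∈ Set.uIoc c c', ‖Ψ (x + b * I)‖ ≤ (1 + T ^ 2)⁻¹ * K := by
      intro x hx
      rw [Set.uIoc_of_le hcc] at hx
      have hx0 : (0:ℝ) < x := lt_trans hc hx.1
      have hre : (↑x + ↑b * I : ℂ).re = x := by simp
      have him : (↑x + ↑b * I : ℂ).im = b := by simp
      have hG := hGb (↑x + ↑b * I) (by rw [hre]; exact hx0.le)
      rw [him, hb] at hG
      have hexp : ‖Complex.exp ((↑x + ↑b * I) * ↑t)‖ = Real.exp (x * t) := by
        rw [Complex.norm_exp, Complex.mul_re]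
        simp
      have hxt : Real.exp (x * t) ≤ K := by
        rcases le_or_gt 0 t with ht | ht
        · have : x * t ≤ c' * t := by nlinarith [hx.2]
          calc Real.exp (x * t) ≤ Real.exp (c' * t) := Real.exp_le_exp.2 this
            _ ≤ K := by rw [hKdef]; nlinarith [Real.exp_pos (c * t)]
        · have : x * t ≤ c * t := by nlinarith [hx.1]
          calc Real.exp (x * t) ≤ Real.exp (c * t) := Real.exp_le_exp.2 this
            _ ≤ K := by rw [hKdef]; nlinarith [Real.exp_pos (c' * t)]
      calc ‖Ψ (↑x + ↑b * I)‖ = ‖G (↑x + ↑b * I)‖ * Real.exp (x * t) := by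
            rw [hΨ]; rw [norm_mul, hexp]
        _ ≤ (1 + T ^ 2)⁻¹ * K := by
            apply mul_le_mul hG hxt (Real.exp_nonneg _)
            positivity
    have := intervalIntegral.norm_integral_le_of_norm_le_const h1
    linarith [this]
  have hKpos : 0 < K := by positivity
  have hzero : Tendsto (fun T : ℝ => (1 + T ^ 2)⁻¹ * K * |c' - c|) atTop (𝓝 0) := by
    have h2 : Tendsto (fun T : ℝ => 1 + T ^ 2) atTop atTop :=
      tendsto_atTop_add_const_left _ _ (tendsto_pow_atTop two_ne_zero)
    have h3 : Tendsto (fun T : ℝ => (1 + T ^ 2)⁻¹) atTop (𝓝 0) :=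
      tendsto_inv_atTop_zero.comp h2
    have := (h3.mul_const K).mul_const |c' - c|
    simpa using this
  have hhor1 : Tendsto (fun T : ℝ => ∫ x in c..c', Ψ (x + (-T) * I)) atTop (𝓝 0) :=
    squeeze_zero_norm (fun T => by simpa using hbnd T (-T) (by ring)) hzero
  have hhor2 : Tendsto (fun T : ℝ => ∫ x in c..c', Ψ (x + T * I)) atTop (𝓝 0) :=
    squeeze_zero_norm (fun T => hbnd T T rfl) hzero
  set L : ℝ → ℂ := fun a => ∫ u : ℝ, G (a + u * I) * Complex.exp ((a + u * I) * t) with hL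
  have hcomb : Tendsto (fun T : ℝ =>
      ((∫ x in c..c', Ψ (x + (-T) * I)) - (∫ x in c..c', Ψ (x + T * I)))
        + (I • (∫ y in (-T)..T, Ψ (c' + y * I)) - I • (∫ y in (-T)..T, Ψ (c + y * I))))
      atTop (𝓝 ((0 - 0) + (I • L c' - I • L c))) :=
    (hhor1.sub hhor2).add (((hvert c' hc').const_smul I).sub ((hvert c hc).const_smul I))
  have heq0 : (0 - 0 : ℂ) + (I • L c' - I • L c) = 0 := by
    apply tendsto_nhds_unique hcomb
    have : (fun _ : ℝ => (0:ℂ)) = (fun T : ℝ =>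
      ((∫ x in c..c', Ψ (x + (-T) * I)) - (∫ x in c..c', Ψ (x + T * I)))
        + (I • (∫ y in (-T)..T, Ψ (c' + y * I)) - I • (∫ y in (-T)..T, Ψ (c + y * I)))) := by
      funext T; rw [hrect T]
    rw [← this]
    exact tendsto_const_nhds
  have hmul : I * L c' = I * L c := by
    simp only [smul_eq_mul] at heq0
    linear_combination heq0
  exact (mul_left_cancel₀ Complex.I_ne_zero hmul).symm



lemma lineInt_indep' (hGd : DifferentiableOn ℂ G {z | 0 < z.re})
    (hGb : ∀ z : ℂ, 0 ≤ z.re → ‖G z‖ ≤ (1 + z.im ^ 2)⁻¹)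
    {c c' : ℝ} (hc : 0 < c) (hc' : 0 < c') (t : ℝ) :
    lineInt G c t = lineInt G c' t := by
  rcases le_total c c' with h | h
  · exact lineInt_indep hGd hGb hc h t
  · exact (lineInt_indep hGd hGb hc' h t).symm

def fInv (G : ℂ → ℂ) : ℝ → ℂ := fun t => (2 * Real.pi)⁻¹ * lineInt G 1 t

lemma fInv_eq (hGd : DifferentiableOn ℂ G {z | 0 < z.re})
    (hGb : ∀ z : ℂ, 0 ≤ z.re → ‖G z‖ ≤ (1 + z.im ^ 2)⁻¹)
    {c : ℝ} (hc : 0 < c) (t : ℝ) :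
    fInv G t = (2 * Real.pi)⁻¹ * lineInt G c t := by
  rw [fInv, lineInt_indep' hGd hGb one_pos hc t]

lemma norm_fInv_le (hGd : DifferentiableOn ℂ G {z | 0 < z.re})
    (hGb : ∀ z : ℂ, 0 ≤ z.re → ‖G z‖ ≤ (1 + z.im ^ 2)⁻¹)
    {c : ℝ} (hc : 0 < c) (t : ℝ) :
    ‖fInv G t‖ ≤ 2⁻¹ * Real.exp (c * t) := by
  rw [fInv_eq hGd hGb hc t, norm_mul]
  have h1 : ‖(((2 * Real.pi)⁻¹ : ℝ) : ℂ)‖ = (2 * Real.pi)⁻¹ := by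
    rw [Complex.norm_real, Real.norm_eq_abs]
    exact abs_of_nonneg (by positivity)
  rw [h1]
  have h2 := norm_lineInt_le hGd hGb hc t
  have hπ : (0:ℝ) < Real.pi := Real.pi_pos
  calc (2 * Real.pi)⁻¹ * ‖lineInt G c t‖ ≤ (2 * Real.pi)⁻¹ * (Real.pi * Real.exp (c * t)) := by
        apply mul_le_mul_of_nonneg_left h2; positivity
    _ = 2⁻¹ * Real.exp (c * t) := by field_simp

lemma fInv_neg (hGd : DifferentiableOn ℂ G {z | 0 < z.re})
    (hGb : ∀ z : ℂ, 0 ≤ z.re → ‖G z‖ ≤ (1 + z.im ^ 2)⁻¹)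
    {t : ℝ} (ht : t < 0) : fInv G t = 0 := by
  have hb : ∀ᶠ c in (atTop : Filter ℝ), ‖fInv G t‖ ≤ 2⁻¹ * Real.exp (c * t) := by
    filter_upwards [eventually_gt_atTop (0:ℝ)] with c hc
    exact norm_fInv_le hGd hGb hc t
  have hlim : Tendsto (fun c : ℝ => 2⁻¹ * Real.exp (c * t)) atTop (𝓝 0) := by
    have h1 : Tendsto (fun c : ℝ => c * t) atTop atBot :=
      Tendsto.atTop_mul_const_of_neg ht tendsto_id
    have := Real.tendsto_exp_atBot.comp h1
    simpa using this.const_mul (2⁻¹ : ℝ)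
  have : ‖fInv G t‖ ≤ 0 := ge_of_tendsto hlim hb
  simpa using le_antisymm this (norm_nonneg _)

lemma fInv_cont (hGd : DifferentiableOn ℂ G {z | 0 < z.re})
    (hGb : ∀ z : ℂ, 0 ≤ z.re → ‖G z‖ ≤ (1 + z.im ^ 2)⁻¹) :
    Continuous (fInv G) := by
  have h : Continuous fun t : ℝ => lineInt G 1 t := by
    rw [continuous_iff_continuousAt]
    intro t₀
    apply MeasureTheory.continuousAt_of_dominated
      (bound := fun u : ℝ => Real.exp (t₀ + 1) * (1 + u ^ 2)⁻¹)
    · exact Filter.Eventually.of_forall fun t =>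
        ((cont_comp hGd one_pos).mul (by continuity)).aestronglyMeasurable
    · filter_upwards [eventually_lt_nhds (lt_add_one t₀)] with t ht
      apply Filter.Eventually.of_forall
      intro u
      have := norm_integrand_le (c := 1) zero_le_one hGb t u
      refine this.trans ?_
      have : Real.exp (1 * t) ≤ Real.exp (t₀ + 1) := Real.exp_le_exp.2 (by linarith)
      calc (1 + u ^ 2)⁻¹ * Real.exp (1 * t) ≤ (1 + u ^ 2)⁻¹ * Real.exp (t₀ + 1) := by
            apply mul_le_mul_of_nonneg_left this; positivity
        _ = Real.exp (t₀ + 1) * (1 + u ^ 2)⁻¹ := mul_comm _ _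
    · exact integrable_inv_one_add_sq.const_mul _
    · exact Filter.Eventually.of_forall fun u => by
        apply Continuous.continuousAt
        continuity
  exact continuous_const.mul h

lemma fInv_zero_of_nonpos (hGd : DifferentiableOn ℂ G {z | 0 < z.re})
    (hGb : ∀ z : ℂ, 0 ≤ z.re → ‖G z‖ ≤ (1 + z.im ^ 2)⁻¹)
    {t : ℝ} (ht : t ≤ 0) : fInv G t = 0 := by
  rcases lt_or_eq_of_le ht with h | h
  · exact fInv_neg hGd hGb h
  · subst h
    have hc : ContinuousAt (fInv G) 0 := (fInv_cont hGd hGb).continuousAt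
    have : Tendsto (fInv G) (nhdsWithin 0 (Iio 0)) (𝓝 (fInv G 0)) :=
      hc.continuousWithinAt.tendsto
    have h2 : Tendsto (fInv G) (nhdsWithin 0 (Iio 0)) (𝓝 0) := by
      apply Tendsto.congr' ?_ tendsto_const_nhds
      filter_upwards [self_mem_nhdsWithin] with x hx
      exact (fInv_neg hGd hGb hx).symm
    have hne : (nhdsWithin (0:ℝ) (Iio 0)).NeBot := by infer_instance
    exact tendsto_nhds_unique this h2


lemma fourier_g_eq (hGd : DifferentiableOn ℂ G {z | 0 < z.re})
    (hGb : ∀ z : ℂ, 0 ≤ z.re → ‖G z‖ ≤ (1 + z.im ^ 2)⁻¹)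
    {l : ℂ} (hl : 0 < l.re) :
    (∫ t : ℝ, Complex.exp (-(l * t)) * fInv G t) = G l := by
  set σ : ℝ := l.re with hσ
  set ξ₀ : ℝ := l.im / (2 * Real.pi) with hξ₀
  have hπ : (0:ℝ) < Real.pi := Real.pi_pos
  set φt : ℝ → ℂ := fun ξ => G (σ + ((2 * Real.pi * (-ξ) : ℝ) : ℂ) * I) with hφt
  set g : ℝ → ℂ := fun t => Complex.exp (-(σ:ℂ) * t) * fInv G t with hg
  -- continuity of φt
  have hmap : Continuous fun ξ : ℝ => ((σ:ℂ) + (2 * Real.pi * (-ξ) : ℝ) * I) := by continuity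
  have hφcont : Continuous φt :=
    hGd.continuousOn.comp_continuous hmap (fun ξ => by
      simp only [Set.mem_setOf_eq, Complex.add_re, Complex.ofReal_re, Complex.mul_re,
        Complex.I_re, Complex.ofReal_im, Complex.I_im]
      simpa using hl)
  -- integrability of φt
  have hφbound : ∀ ξ : ℝ, ‖φt ξ‖ ≤ (1 + ξ ^ 2)⁻¹ := by
    intro ξ
    have h := hGb ((σ:ℂ) + (2 * Real.pi * (-ξ) : ℝ) * I) (by simp [hσ, hl.le]; exact hl.le)
    have him : ((σ:ℂ) + (2 * Real.pi * (-ξ) : ℝ) * I).im = 2 * Real.pi * (-ξ) := by simp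
    rw [him] at h
    refine h.trans ?_
    have h9 : Real.pi ^ 2 ≥ 9 := by nlinarith [Real.pi_gt_three]
    have h1 : ξ ^ 2 ≤ (2 * Real.pi * (-ξ)) ^ 2 := by nlinarith [sq_nonneg ξ, h9]
    have h2 : (0:ℝ) < 1 + ξ ^ 2 := by positivity
    apply inv_anti₀ h2
    linarith
  have hφint : Integrable φt :=
    Integrable.mono' integrable_inv_one_add_sq hφcont.aestronglyMeasurable
      (Filter.Eventually.of_forall hφbound)
  -- g vanishes on nonpositive reals
  have hgzero : ∀ t : ℝ, t ≤ 0 → g t = 0 := by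
    intro t ht
    rw [hg]; simp [fInv_zero_of_nonpos hGd hGb ht]
  -- continuity of g
  have hgcont : Continuous g := by
    apply Continuous.mul ?_ (fInv_cont hGd hGb)
    continuity
  -- integrability of g
  have hgint : Integrable g := by
    rw [← integrableOn_univ, ← Set.Iic_union_Ioi (a := (0:ℝ)), integrableOn_union]
    constructor
    · exact (integrableOn_zero).congr_fun (fun x hx => (hgzero x hx).symm) measurableSet_Iic
    · have hb : ∀ t ∈ Ioi (0:ℝ), ‖g t‖ ≤ 2⁻¹ * Real.exp (-(σ/2) * t) := by
        intro t _
        rw [hg]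
        have hnorm : ‖Complex.exp (-(σ:ℂ) * t)‖ = Real.exp (-σ * t) := by
          rw [Complex.norm_exp]
          norm_num [Complex.mul_re]
        rw [norm_mul, hnorm]
        have h2 := norm_fInv_le hGd hGb (c := σ/2) (by positivity) t
        calc Real.exp (-σ * t) * ‖fInv G t‖ ≤ Real.exp (-σ * t) * (2⁻¹ * Real.exp (σ/2 * t)) := by
              apply mul_le_mul_of_nonneg_left h2 (Real.exp_nonneg _)
          _ = 2⁻¹ * (Real.exp (σ/2*t) * Real.exp (-σ*t)) := by ring
          _ = 2⁻¹ * Real.exp (-(σ/2) * t) := by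
              rw [← Real.exp_add]; congr 1; ring
      refine Integrable.mono' ((exp_neg_integrableOn_Ioi 0 (b := σ/2) (by positivity)).const_mul 2⁻¹)
        (hgcont.aestronglyMeasurable.restrict) ?_
      filter_upwards [ae_restrict_mem measurableSet_Ioi] with t ht
      simpa using hb t ht
  -- Fourier transform of φt equals g
  have hFφ : 𝓕 φt = g := by
    funext t
    rw [Real.fourier_real_eq_integral_exp_smul]
    have step1 : (∫ ξ : ℝ, Complex.exp ((-2 * Real.pi * ξ * t : ℝ) * I) • φt ξ)
        = ∫ ξ : ℝ, Complex.exp ((2 * Real.pi * ξ * t : ℝ) * I) • G (σ + (2 * Real.pi * ξ : ℝ) * I) := by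
      have := MeasureTheory.Measure.integral_comp_mul_left
        (g := fun ξ : ℝ => Complex.exp ((2 * Real.pi * ξ * t : ℝ) * I) • G (σ + (2 * Real.pi * ξ : ℝ) * I))
        (-1)
      simp only [neg_one_mul, abs_neg, abs_one, inv_neg, inv_one, one_smul] at this
      rw [← this]
      congr 1
      funext ξ
      have e1 : (2 * Real.pi * -ξ * t : ℝ) = (-2) * Real.pi * ξ * t := by ring
      have e2 : (2 * Real.pi * -ξ : ℝ) = 2 * Real.pi * (-ξ) := by ring
      rw [e1, e2]
    rw [step1]
    have step2 : (∫ ξ : ℝ, Complex.exp ((2 * Real.pi * ξ * t : ℝ) * I) • G (σ + (2 * Real.pi * ξ : ℝ) * I))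
        = (2 * Real.pi)⁻¹ • ∫ u : ℝ, Complex.exp ((u * t : ℝ) * I) • G (σ + (u:ℝ) * I) := by
      have := MeasureTheory.Measure.integral_comp_mul_left
        (g := fun u : ℝ => Complex.exp ((u * t : ℝ) * I) • G (σ + (u:ℝ) * I))
        (2 * Real.pi)
      rw [abs_of_pos (by positivity : (0:ℝ) < (2*Real.pi)⁻¹)] at this
      rw [← this]
    rw [step2, hg]
    show _ = Complex.exp (-(σ:ℂ) * ↑t) * fInv G t
    rw [fInv_eq hGd hGb (c := σ) (by exact hl) t, lineInt]
    have hpt : ∀ u : ℝ, Complex.exp (((u * t : ℝ) : ℂ) * I) • G (σ + (u:ℝ) * I)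
        = Complex.exp (-(σ:ℂ) * t) * (G (σ + (u:ℝ) * I) * Complex.exp (((σ:ℂ) + (u:ℝ) * I) * t)) := by
      intro u
      rw [smul_eq_mul, mul_comm (Complex.exp (((u * t : ℝ) : ℂ) * I)) (G _)]
      rw [mul_comm (Complex.exp (-(σ:ℂ) * t)) _, mul_assoc, ← Complex.exp_add]
      congr 2
      push_cast
      ring
    simp only [hpt]
    rw [MeasureTheory.integral_const_mul, Complex.real_smul]
    ring
  -- inversion
  have hinv : 𝓕⁻ (𝓕 φt) = φt := hφcont.fourierInv_fourier_eq hφint (by rw [hFφ]; exact hgint)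
  have hval : 𝓕 g ξ₀ = G l := by
    have h1 : 𝓕⁻ (𝓕 φt) (-ξ₀) = φt (-ξ₀) := by rw [hinv]
    rw [Real.fourierInv_eq_fourier_neg, neg_neg, hFφ] at h1
    rw [h1, hφt]
    show G (↑σ + ((2 * Real.pi * (- -ξ₀) : ℝ) : ℂ) * I) = G l
    have h3 : (2 * Real.pi * (- -ξ₀) : ℝ) = l.im := by
      rw [hξ₀]; field_simp
    rw [h3, hσ]
    norm_num [Complex.re_add_im]
  rw [← hval, Real.fourier_real_eq_integral_exp_smul]
  congr 1
  funext t
  rw [hg, smul_eq_mul, ← mul_assoc, ← Complex.exp_add]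
  congr 2
  have h2 : (2 * Real.pi * ξ₀ : ℝ) = l.im := by rw [hξ₀]; field_simp
  have : l = (σ:ℂ) + (l.im:ℝ) * I := by rw [hσ]; exact (Complex.re_add_im l).symm
  rw [this]
  push_cast
  rw [← h2]
  push_cast
  ring


lemma integrableOn_exp_fInv (hGd : DifferentiableOn ℂ G {z | 0 < z.re})
    (hGb : ∀ z : ℂ, 0 ≤ z.re → ‖G z‖ ≤ (1 + z.im ^ 2)⁻¹)
    {l : ℂ} (hl : 0 < l.re) :
    IntegrableOn (fun s : ℝ => Complex.exp (-(l * s)) * fInv G s) (Ioi 0) := by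
  have hb : ∀ s : ℝ, ‖Complex.exp (-(l * s)) * fInv G s‖ ≤ 2⁻¹ * Real.exp (-(l.re/2) * s) := by
    intro s
    rw [norm_mul]
    have h1 : ‖Complex.exp (-(l * s))‖ = Real.exp (-(l.re * s)) := by
      rw [Complex.norm_exp]
      congr 1
      rw [Complex.neg_re, Complex.mul_re]
      simp
    rw [h1]
    have h2 := norm_fInv_le hGd hGb (c := l.re/2) (by positivity) s
    calc Real.exp (-(l.re * s)) * ‖fInv G s‖
        ≤ Real.exp (-(l.re * s)) * (2⁻¹ * Real.exp (l.re/2 * s)) := by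
          apply mul_le_mul_of_nonneg_left h2 (Real.exp_nonneg _)
      _ = 2⁻¹ * (Real.exp (l.re/2 * s) * Real.exp (-(l.re * s))) := by ring
      _ = 2⁻¹ * Real.exp (-(l.re/2) * s) := by rw [← Real.exp_add]; congr 1; ring
  refine Integrable.mono' ((exp_neg_integrableOn_Ioi 0 (b := l.re/2) (by positivity)).const_mul 2⁻¹)
    ?_ (Filter.Eventually.of_forall fun s => hb s)
  exact (Continuous.aestronglyMeasurable (by
    exact (Complex.continuous_exp.comp (by continuity)).mul (fInv_cont hGd hGb))).restrict

lemma setIntegral_exp_fInv (hGd : DifferentiableOn ℂ G {z | 0 < z.re})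
    (hGb : ∀ z : ℂ, 0 ≤ z.re → ‖G z‖ ≤ (1 + z.im ^ 2)⁻¹)
    {l : ℂ} (hl : 0 < l.re) :
    (∫ s in Ioi (0:ℝ), Complex.exp (-(l * s)) * fInv G s) = G l := by
  rw [setIntegral_eq_integral_of_forall_compl_eq_zero (fun s hs => by
    rw [fInv_zero_of_nonpos hGd hGb (by simpa using hs), mul_zero])]
  exact fourier_g_eq hGd hGb hl

lemma tendsto_lap_fInv (hGd : DifferentiableOn ℂ G {z | 0 < z.re})
    (hGb : ∀ z : ℂ, 0 ≤ z.re → ‖G z‖ ≤ (1 + z.im ^ 2)⁻¹)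
    {l : ℂ} (hl : 0 < l.re) :
    Tendsto (fun T : ℝ => ∫ s in Ioc (0:ℝ) T, Complex.exp (-(l * s)) * fInv G s)
      atTop (𝓝 (G l)) := by
  have h := MeasureTheory.intervalIntegral_tendsto_integral_Ioi 0
    (integrableOn_exp_fInv hGd hGb hl) tendsto_id
  rw [setIntegral_exp_fInv hGd hGb hl] at h
  apply h.congr'
  filter_upwards [eventually_ge_atTop (0:ℝ)] with T hT
  show (∫ x in (0:ℝ)..T, Complex.exp (-(l * x)) * fInv G x) = _
  rw [intervalIntegral.integral_of_le hT]

end LapAux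


namespace BlPart

lemma prod_dist_one (a : ℕ → ℂ) (h : ∀ k, ‖a k‖ ≤ 1) (n : ℕ) :
    ‖(∏ k ∈ Finset.range n, a k) - 1‖ ≤ ∑ k ∈ Finset.range n, ‖a k - 1‖ := by
  induction n with
  | zero => simp
  | succ n ih =>
    rw [Finset.prod_range_succ, Finset.sum_range_succ]
    have h1 : (∏ k ∈ Finset.range n, a k) * a n - 1
        = ((∏ k ∈ Finset.range n, a k) - 1) * a n + (a n - 1) := by ring
    rw [h1]
    calc ‖((∏ k ∈ Finset.range n, a k) - 1) * a n + (a n - 1)‖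
        ≤ ‖((∏ k ∈ Finset.range n, a k) - 1) * a n‖ + ‖a n - 1‖ := norm_add_le _ _
      _ ≤ ‖(∏ k ∈ Finset.range n, a k) - 1‖ * 1 + ‖a n - 1‖ := by
          rw [norm_mul]
          gcongr
          exact h n
      _ ≤ (∑ k ∈ Finset.range n, ‖a k - 1‖) + ‖a n - 1‖ := by
          rw [mul_one]; gcongr
variable (μ : ℕ → ℂ)

def bl (k : ℕ) (z : ℂ) : ℂ :=
  ((starRingEnd ℂ) (μ k) * (μ k - z)) / (μ k * ((starRingEnd ℂ) (μ k) + z))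

def PP (n : ℕ) (z : ℂ) : ℂ := ∏ k ∈ Finset.range n, bl μ k z

variable {μ}

section facts

lemma mu_ne (hμ : ∀ k, 0 < (μ k).re) (k : ℕ) : μ k ≠ 0 := by
  intro h
  have := hμ k
  rw [h] at this
  simp at this

lemma denom_ne (hμ : ∀ k, 0 < (μ k).re) {z : ℂ} (hz : 0 ≤ z.re) (k : ℕ) : (starRingEnd ℂ) (μ k) + z ≠ 0 := by
  intro h
  have : ((starRingEnd ℂ) (μ k) + z).re = 0 := by rw [h]; simp
  rw [Complex.add_re, Complex.conj_re] at this
  have := hμ k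
  linarith

lemma norm_bl_le (hμ : ∀ k, 0 < (μ k).re) {z : ℂ} (hz : 0 ≤ z.re) (k : ℕ) : ‖bl μ k z‖ ≤ 1 := by
  rw [bl, norm_div, norm_mul, norm_mul]
  have hknorm : ‖(starRingEnd ℂ) (μ k)‖ = ‖μ k‖ := by
    rw [Complex.norm_conj]
  rw [hknorm]
  have h1 : ‖μ k - z‖ ≤ ‖(starRingEnd ℂ) (μ k) + z‖ := by
    rw [Complex.norm_def, Complex.norm_def]
    apply Real.sqrt_le_sqrt
    rw [Complex.normSq_apply, Complex.normSq_apply]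
    simp only [Complex.sub_re, Complex.sub_im, Complex.add_re, Complex.add_im,
      Complex.conj_re, Complex.conj_im]
    have := mul_nonneg (hμ k).le hz
    nlinarith
  have hden : (0:ℝ) < ‖μ k‖ * ‖(starRingEnd ℂ) (μ k) + z‖ := by
    apply mul_pos
    · simpa [norm_pos_iff] using mu_ne hμ k
    · simpa [norm_pos_iff] using denom_ne hμ hz k
  rw [div_le_one hden]
  gcongr

lemma one_sub_bl (hμ : ∀ k, 0 < (μ k).re) {z : ℂ} (hz : 0 ≤ z.re) (k : ℕ) :
    1 - bl μ k z = (2 * (μ k).re * z) / (μ k * ((starRingEnd ℂ) (μ k) + z)) := by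
  rw [bl]
  have hne : μ k * ((starRingEnd ℂ) (μ k) + z) ≠ 0 :=
    mul_ne_zero (mu_ne hμ k) (denom_ne hμ hz k)
  rw [eq_div_iff hne, sub_mul, one_mul, div_mul_cancel₀ _ hne]
  have hconj : μ k + (starRingEnd ℂ) (μ k) = 2 * (μ k).re := by
    rw [Complex.add_conj]
    push_cast
    ring
  linear_combination z * hconj

lemma norm_one_sub_bl (hμ : ∀ k, 0 < (μ k).re) {z : ℂ} (hz : 0 ≤ z.re) (k : ℕ) :
    ‖1 - bl μ k z‖ ≤ 2 * ‖z‖ * ((μ k).re)⁻¹ := by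
  rw [one_sub_bl hμ hz k, norm_div, norm_mul]
  set r : ℝ := (μ k).re with hr
  have hrpos : 0 < r := hμ k
  have h2' : ‖(2 : ℂ) * (r : ℂ)‖ = 2 * r := by
    rw [norm_mul, Complex.norm_real, Real.norm_eq_abs, _root_.abs_of_nonneg hrpos.le]
    norm_num
  rw [h2']
  have hden1 : r ≤ ‖μ k‖ := by
    exact Complex.re_le_norm (μ k)
  have hden2 : r ≤ ‖(starRingEnd ℂ) (μ k) + z‖ := by
    refine le_trans ?_ (Complex.re_le_norm _)
    rw [Complex.add_re, Complex.conj_re]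
    linarith
  have hD : r * r ≤ ‖μ k * ((starRingEnd ℂ) (μ k) + z)‖ := by
    rw [norm_mul]
    exact mul_le_mul hden1 hden2 hrpos.le (norm_nonneg _)
  calc 2 * r * ‖z‖ / ‖μ k * ((starRingEnd ℂ) (μ k) + z)‖
      ≤ 2 * r * ‖z‖ / (r * r) := by
        apply div_le_div_of_nonneg_left (by positivity) (by positivity) hD
    _ = 2 * ‖z‖ * r⁻¹ := by field_simp


lemma norm_PP_le (hμ : ∀ k, 0 < (μ k).re) {z : ℂ} (hz : 0 ≤ z.re) (n : ℕ) :
    ‖PP μ n z‖ ≤ 1 := by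
  rw [PP]
  refine le_trans (Finset.norm_prod_le (Finset.range n) (fun k => bl μ k z)) ?_
  apply Finset.prod_le_one
  · intro k _; exact norm_nonneg _
  · intro k _; exact norm_bl_le hμ hz k

lemma dist_PP_succ (hμ : ∀ k, 0 < (μ k).re) {z : ℂ} (hz : 0 ≤ z.re) (n : ℕ) :
    dist (PP μ n z) (PP μ (n + 1) z) ≤ 2 * ‖z‖ * ((μ n).re)⁻¹ := by
  rw [dist_eq_norm, PP, PP, Finset.prod_range_succ]
  have h1 : (∏ k ∈ Finset.range n, bl μ k z) - (∏ k ∈ Finset.range n, bl μ k z) * bl μ n z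
      = (∏ k ∈ Finset.range n, bl μ k z) * (1 - bl μ n z) := by ring
  rw [h1, norm_mul]
  calc ‖∏ k ∈ Finset.range n, bl μ k z‖ * ‖1 - bl μ n z‖
      ≤ 1 * (2 * ‖z‖ * ((μ n).re)⁻¹) :=
        mul_le_mul (norm_PP_le hμ hz n) (norm_one_sub_bl hμ hz n) (norm_nonneg _) one_pos.le
    _ = 2 * ‖z‖ * ((μ n).re)⁻¹ := one_mul _

lemma cauchy_PP (hμ : ∀ k, 0 < (μ k).re) (hs : Summable fun k => ((μ k).re)⁻¹)
    {z : ℂ} (hz : 0 ≤ z.re) : CauchySeq (fun n => PP μ n z) :=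
  cauchySeq_of_dist_le_of_summable (fun n => 2 * ‖z‖ * ((μ n).re)⁻¹)
    (fun n => dist_PP_succ hμ hz n) (by simpa [mul_assoc] using (hs.mul_left (2 * ‖z‖)))

def FF (μ : ℕ → ℂ) : ℂ → ℂ := fun z => limUnder atTop (fun n => PP μ n z)

lemma tendsto_FF (hμ : ∀ k, 0 < (μ k).re) (hs : Summable fun k => ((μ k).re)⁻¹)
    {z : ℂ} (hz : 0 ≤ z.re) :
    Tendsto (fun n => PP μ n z) atTop (𝓝 (FF μ z)) :=
  (cauchy_PP hμ hs hz).tendsto_limUnder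

lemma norm_FF_le (hμ : ∀ k, 0 < (μ k).re) (hs : Summable fun k => ((μ k).re)⁻¹)
    {z : ℂ} (hz : 0 ≤ z.re) : ‖FF μ z‖ ≤ 1 :=
  le_of_tendsto ((tendsto_FF hμ hs hz).norm)
    (Filter.Eventually.of_forall fun n => norm_PP_le hμ hz n)

lemma FF_zero (hμ : ∀ k, 0 < (μ k).re) (hs : Summable fun k => ((μ k).re)⁻¹) (k : ℕ) :
    FF μ (μ k) = 0 := by
  have hz : 0 ≤ (μ k).re := (hμ k).le
  refine tendsto_nhds_unique (tendsto_FF hμ hs hz) ?_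
  apply Tendsto.congr' ?_ tendsto_const_nhds
  filter_upwards [eventually_ge_atTop (k + 1)] with n hn
  symm
  apply Finset.prod_eq_zero (Finset.mem_range.2 hn)
  rw [bl]
  simp

lemma dist_FF_PP (hμ : ∀ k, 0 < (μ k).re) (hs : Summable fun k => ((μ k).re)⁻¹)
    {z : ℂ} (hz : 0 ≤ z.re) (n : ℕ) :
    dist (FF μ z) (PP μ n z)
      ≤ 2 * ‖z‖ * ((∑' k, ((μ k).re)⁻¹) - ∑ k ∈ Finset.range n, ((μ k).re)⁻¹) := by
  have hnn : ∀ k, 0 ≤ ((μ k).re)⁻¹ := fun k => (inv_nonneg).2 (hμ k).le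
  have hm : ∀ m, n ≤ m → dist (PP μ m z) (PP μ n z)
      ≤ 2 * ‖z‖ * ((∑' k, ((μ k).re)⁻¹) - ∑ k ∈ Finset.range n, ((μ k).re)⁻¹) := by
    intro m hnm
    calc dist (PP μ m z) (PP μ n z) = dist (PP μ n z) (PP μ m z) := dist_comm _ _
      _ ≤ ∑ i ∈ Finset.Ico n m, dist (PP μ i z) (PP μ (i + 1) z) :=
          dist_le_Ico_sum_dist (fun i => PP μ i z) hnm
      _ ≤ ∑ i ∈ Finset.Ico n m, 2 * ‖z‖ * ((μ i).re)⁻¹ := by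
          apply Finset.sum_le_sum
          intro i _
          exact dist_PP_succ hμ hz i
      _ = 2 * ‖z‖ * ∑ i ∈ Finset.Ico n m, ((μ i).re)⁻¹ := by rw [Finset.mul_sum]
      _ ≤ 2 * ‖z‖ * ((∑' k, ((μ k).re)⁻¹) - ∑ k ∈ Finset.range n, ((μ k).re)⁻¹) := by
          apply mul_le_mul_of_nonneg_left ?_ (by positivity)
          rw [Finset.sum_Ico_eq_sub _ hnm]
          have := hs.sum_le_tsum (Finset.range m) (fun k _ => hnn k)
          linarith
  have hlim : Tendsto (fun m => dist (PP μ m z) (PP μ n z)) atTop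
      (𝓝 (dist (FF μ z) (PP μ n z))) :=
    (tendsto_FF hμ hs hz).dist tendsto_const_nhds
  refine le_of_tendsto hlim ?_
  filter_upwards [eventually_ge_atTop n] with m hm'
  exact hm m hm'

lemma PP_diff (hμ : ∀ k, 0 < (μ k).re) (n : ℕ) :
    DifferentiableOn ℂ (PP μ n) {z : ℂ | 0 < z.re} := by
  apply DifferentiableOn.fun_finsetProd
  intro k _
  apply DifferentiableOn.div
  · exact (differentiable_const _).differentiableOn.mul
      ((differentiable_const _).sub differentiable_id).differentiableOn
  · exact (differentiable_const _).differentiableOn.mul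
      ((differentiable_const _).add differentiable_id).differentiableOn
  · intro z hz
    exact mul_ne_zero (mu_ne hμ k) (denom_ne hμ (le_of_lt hz) k)

lemma FF_diff (hμ : ∀ k, 0 < (μ k).re) (hs : Summable fun k => ((μ k).re)⁻¹) :
    DifferentiableOn ℂ (FF μ) {z : ℂ | 0 < z.re} := by
  have hopen : IsOpen {z : ℂ | 0 < z.re} := isOpen_lt continuous_const Complex.continuous_re
  have htlu : TendstoLocallyUniformlyOn (fun n z => PP μ n z) (FF μ) atTop {z : ℂ | 0 < z.re} := by
    rw [tendstoLocallyUniformlyOn_iff_forall_isCompact hopen]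
    intro K hK hKc
    rw [Metric.tendstoUniformlyOn_iff]
    intro ε hε
    obtain ⟨R, hR⟩ := hKc.isBounded.exists_norm_le
    have hES : Tendsto (fun n => ∑ k ∈ Finset.range n, ((μ k).re)⁻¹) atTop
        (𝓝 (∑' k, ((μ k).re)⁻¹)) := hs.hasSum.tendsto_sum_nat
    have hto0 : Tendsto (fun n => 2 * (|R| + 1) *
        ((∑' k, ((μ k).re)⁻¹) - ∑ k ∈ Finset.range n, ((μ k).re)⁻¹)) atTop (𝓝 0) := by
      have := (tendsto_const_nhds (x := (∑' k, ((μ k).re)⁻¹)) (f := atTop)).sub hES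
      have h2 := this.const_mul (2 * (|R| + 1))
      simpa using h2
    filter_upwards [hto0.eventually (eventually_lt_nhds hε)] with n hn z hzK
    have hz : (0:ℝ) ≤ z.re := (hK hzK).le
    have h1 := dist_FF_PP hμ hs hz n
    have hzR : ‖z‖ ≤ |R| + 1 := le_trans (hR z hzK) (by
      have := le_abs_self R; linarith)
    have htail : 0 ≤ (∑' k, ((μ k).re)⁻¹) - ∑ k ∈ Finset.range n, ((μ k).re)⁻¹ := by
      have := hs.sum_le_tsum (Finset.range n)
        (fun k _ => (inv_nonneg).2 (hμ k).le)
      linarith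
    calc dist (FF μ z) (PP μ n z)
        ≤ 2 * ‖z‖ * ((∑' k, ((μ k).re)⁻¹) - ∑ k ∈ Finset.range n, ((μ k).re)⁻¹) := h1
      _ ≤ 2 * (|R| + 1) * ((∑' k, ((μ k).re)⁻¹) - ∑ k ∈ Finset.range n, ((μ k).re)⁻¹) := by
          apply mul_le_mul_of_nonneg_right ?_ htail
          have := norm_nonneg z
          linarith
      _ < ε := hn
  exact htlu.differentiableOn (Filter.Eventually.of_forall fun n => PP_diff hμ n) hopen

lemma norm_FF_lower (hμ : ∀ k, 0 < (μ k).re) (hs : Summable fun k => ((μ k).re)⁻¹)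
    {x : ℝ} (hx : 0 < x)
    (hhalf : 2 * x * (∑' k, ((μ k).re)⁻¹) ≤ 1/2) :
    (1:ℝ)/2 ≤ ‖FF μ (x:ℂ)‖ := by
  have hzre : (0:ℝ) ≤ (x:ℂ).re := by simp [hx.le]
  have hPPlow : ∀ n, (1:ℝ)/2 ≤ ‖PP μ n (x:ℂ)‖ := by
    intro n
    have hdist : ‖PP μ n (x:ℂ) - 1‖ ≤ ∑ k ∈ Finset.range n, ‖bl μ k (x:ℂ) - 1‖ :=
      prod_dist_one _ (fun k => norm_bl_le hμ hzre k) n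
    have hsum : ∑ k ∈ Finset.range n, ‖bl μ k (x:ℂ) - 1‖ ≤ 1/2 := by
      have h1 : ∀ k, ‖bl μ k (x:ℂ) - 1‖ ≤ 2 * x * ((μ k).re)⁻¹ := by
        intro k
        rw [norm_sub_rev]
        have := norm_one_sub_bl hμ hzre k
        rw [Complex.norm_real, Real.norm_eq_abs, _root_.abs_of_nonneg hx.le] at this
        exact this
      calc ∑ k ∈ Finset.range n, ‖bl μ k (x:ℂ) - 1‖
          ≤ ∑ k ∈ Finset.range n, 2 * x * ((μ k).re)⁻¹ :=
            Finset.sum_le_sum fun k _ => h1 k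
        _ = 2 * x * ∑ k ∈ Finset.range n, ((μ k).re)⁻¹ := by rw [Finset.mul_sum]
        _ ≤ 2 * x * (∑' k, ((μ k).re)⁻¹) := by
            apply mul_le_mul_of_nonneg_left ?_ (by positivity)
            exact hs.sum_le_tsum (Finset.range n) (fun k _ => (inv_nonneg).2 (hμ k).le)
        _ ≤ 1/2 := hhalf
    have htri : (1:ℝ) - ‖PP μ n (x:ℂ) - 1‖ ≤ ‖PP μ n (x:ℂ)‖ := by
      have h3 := norm_sub_norm_le (1:ℂ) (1 - PP μ n (x:ℂ))
      simp only [sub_sub_cancel, norm_one] at h3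
      rw [norm_sub_rev (1:ℂ)] at h3
      linarith
    linarith
  exact ge_of_tendsto ((tendsto_FF hμ hs hzre).norm) (Filter.Eventually.of_forall hPPlow)

end facts
end BlPart


lemma aux_ineq {δ r A p q cθ : ℝ} (hδ : 0 < δ) (hr : δ ≤ r) (hcθ : 0 < cθ)
    (hsec : A * cθ ≤ r) (hA : 0 < A)
    (hp2 : p ^ 2 = A ^ 2 - 2 * r + 1) (hq2 : q ^ 2 = A ^ 2 + 2 * r + 1)
    (hppos : 0 ≤ p) (hqpos : 0 < q) :
    r⁻¹ ≤ ((1 / cθ ^ 2 + 2 / δ + 1 / δ ^ 2) / 2) * (1 - p / q) := by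
  have hrpos : 0 < r := lt_of_lt_of_le hδ hr
  set C : ℝ := 1 / cθ ^ 2 + 2 / δ + 1 / δ ^ 2 with hC
  have hCpos : 0 < C := by positivity
  have hpq2 : (p * q) ^ 2 = (A ^ 2 + 1) ^ 2 - (2 * r) ^ 2 := by
    rw [mul_pow, hp2, hq2]; ring
  have hA1 : (0:ℝ) < A ^ 2 + 1 := by positivity
  have hpq : p * q ≤ A ^ 2 + 1 := by
    nlinarith [sq_nonneg (p * q - (A ^ 2 + 1)), sq_nonneg r, mul_nonneg hppos hqpos.le]
  have hq2pos : (0:ℝ) < q ^ 2 := by positivity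
  have hstep : 2 * r / q ^ 2 ≤ 1 - p / q := by
    rw [div_le_iff₀ hq2pos]
    have hexp : (1 - p / q) * q ^ 2 = q ^ 2 - p * q := by
      field_simp
    rw [hexp, hq2]
    linarith
  have hqC : q ^ 2 ≤ C * r ^ 2 := by
    have hA2 : A ^ 2 ≤ 1 / cθ ^ 2 * r ^ 2 := by
      rw [div_mul_eq_mul_div, le_div_iff₀ (by positivity : (0:ℝ) < cθ ^ 2)]
      nlinarith [mul_nonneg hA.le hcθ.le]
    have h2r : 2 * r ≤ 2 / δ * r ^ 2 := by
      rw [div_mul_eq_mul_div, le_div_iff₀ hδ]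
      nlinarith
    have h1 : (1:ℝ) ≤ 1 / δ ^ 2 * r ^ 2 := by
      rw [div_mul_eq_mul_div, le_div_iff₀ (by positivity : (0:ℝ) < δ ^ 2)]
      nlinarith
    rw [hq2, hC]
    have : (1 / cθ ^ 2 + 2 / δ + 1 / δ ^ 2) * r ^ 2
        = 1 / cθ ^ 2 * r ^ 2 + 2 / δ * r ^ 2 + 1 / δ ^ 2 * r ^ 2 := by ring
    rw [this]
    linarith
  have h5 : 2 * r / (C * r ^ 2) ≤ 2 * r / q ^ 2 :=
    div_le_div_of_nonneg_left (by positivity) hq2pos hqC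
  have h6 : 2 * r / (C * r ^ 2) = 2 / (C * r) := by
    field_simp
  have h7 : 2 / (C * r) ≤ 1 - p / q := by
    rw [← h6]; exact le_trans h5 hstep
  have h8 : r⁻¹ = (C / 2) * (2 / (C * r)) := by
    field_simp
  rw [h8]
  exact mul_le_mul_of_nonneg_left h7 (by positivity)

lemma summable_re_inv (lam : ℕ → ℂ) (δ : ℝ) (hδ : 0 < δ) (hre : ∀ k, δ ≤ (lam k).re)
    (hsum : Summable (fun k => 1 - ‖(lam k - 1) / (lam k + 1)‖))
    (θ : ℝ) (hθ : θ ∈ Set.Ioo 0 (Real.pi / 2))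
    (harg : ∀ k, |Complex.arg (lam k)| ≤ θ) :
    Summable (fun k => ((lam k).re)⁻¹) := by
  have hcos : 0 < Real.cos θ :=
    Real.cos_pos_of_mem_Ioo ⟨by linarith [hθ.1, Real.pi_pos], hθ.2⟩
  have key : ∀ k, ((lam k).re)⁻¹ ≤ ((1 / Real.cos θ ^ 2 + 2 / δ + 1 / δ ^ 2) / 2) *
      (1 - ‖(lam k - 1) / (lam k + 1)‖) := by
    intro k
    have hrpos : 0 < (lam k).re := lt_of_lt_of_le hδ (hre k)
    have hzne : lam k ≠ 0 := by
      intro h; rw [h] at hrpos; simp at hrpos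
    have hApos : 0 < ‖lam k‖ := norm_pos_iff.2 hzne
    have hsector : ‖lam k‖ * Real.cos θ ≤ (lam k).re := by
      have h1 : Real.cos (Complex.arg (lam k)) = (lam k).re / ‖lam k‖ :=
        Complex.cos_arg hzne
      have h2 : Real.cos θ ≤ Real.cos |Complex.arg (lam k)| := by
        apply Real.cos_le_cos_of_nonneg_of_le_pi (abs_nonneg _) ?_ (harg k)
        linarith [hθ.2, Real.pi_pos]
      rw [Real.cos_abs, h1] at h2
      calc ‖lam k‖ * Real.cos θ
          ≤ ‖lam k‖ * ((lam k).re / ‖lam k‖) :=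
            mul_le_mul_of_nonneg_left h2 hApos.le
        _ = (lam k).re := by field_simp
    have hp2 : (‖lam k - 1‖) ^ 2
        = (‖lam k‖) ^ 2 - 2 * (lam k).re + 1 := by
      rw [Complex.sq_norm, Complex.sq_norm, Complex.normSq_apply, Complex.normSq_apply]
      simp only [Complex.sub_re, Complex.sub_im, Complex.one_re, Complex.one_im]
      ring
    have hq2 : (‖lam k + 1‖) ^ 2
        = (‖lam k‖) ^ 2 + 2 * (lam k).re + 1 := by
      rw [Complex.sq_norm, Complex.sq_norm, Complex.normSq_apply, Complex.normSq_apply]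
      simp only [Complex.add_re, Complex.add_im, Complex.one_re, Complex.one_im]
      ring
    have hqpos : 0 < ‖lam k + 1‖ := by
      apply norm_pos_iff.2
      intro h
      have : (lam k + 1).re = 0 := by rw [h]; simp
      rw [Complex.add_re, Complex.one_re] at this
      linarith
    have := aux_ineq hδ (hre k) hcos hsector hApos hp2 hq2 (norm_nonneg _) hqpos
    rw [norm_div]
    exact this
  apply Summable.of_nonneg_of_le (fun k => inv_nonneg.2 (lt_of_lt_of_le hδ (hre k)).le) key
  exact hsum.mul_left _

end StmtAux

theorem stmt1 (lam : ℕ → ℂ)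
    (hacc : ∀ z : ℂ, ¬ AccPt z (Filter.principal (Set.range lam)))
    (δ : ℝ) (hδ : 0 < δ) (hre : ∀ k, δ ≤ (lam k).re)
    (hsum : Summable (fun k => 1 - ‖(lam k - 1) / (lam k + 1)‖))
    (θ : ℝ) (hθ : θ ∈ Set.Ioo 0 (Real.pi / 2))
    (harg : ∀ k, |Complex.arg (lam k)| ≤ θ) :
    ¬ IsUniquenessSeq lam := by
  intro hU
  have hμpos : ∀ k, 0 < (lam k).re := fun k => lt_of_lt_of_le hδ (hre k)
  have hs : Summable (fun k => ((lam k).re)⁻¹) := summable_re_inv lam δ hδ hre hsum θ hθ harg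
  set S : ℝ := ∑' k, ((lam k).re)⁻¹ with hS
  have hSnn : 0 ≤ S := tsum_nonneg (fun k => inv_nonneg.2 (hμpos k).le)
  set x : ℝ := min (δ / 2) ((8 * S + 8)⁻¹) with hx
  have hxpos : 0 < x := lt_min (by positivity) (by positivity)
  have hhalf : 2 * x * S ≤ 1 / 2 := by
    have hxle : x ≤ (8 * S + 8)⁻¹ := min_le_right _ _
    have h8 : (0:ℝ) < 8 * S + 8 := by linarith
    have h2x : 2 * x * S ≤ 2 * (8 * S + 8)⁻¹ * S := by
      apply mul_le_mul_of_nonneg_right ?_ hSnn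
      linarith
    have heq : 2 * (8 * S + 8)⁻¹ * S = 2 * S / (8 * S + 8) := by ring
    rw [heq] at h2x
    rw [le_div_iff₀ h8] at h2x
    nlinarith
  -- the analytic function G
  set GG : ℂ → ℂ := fun z => BlPart.FF lam z * ((1 + z) ^ 2)⁻¹ with hGG
  have hne1 : ∀ z : ℂ, 0 ≤ z.re → (1 + z) ≠ 0 := by
    intro z hz h
    have h2 : (1 + z).re = 0 := by rw [h]; simp
    rw [Complex.add_re, Complex.one_re] at h2
    linarith
  have hGd : DifferentiableOn ℂ GG {z : ℂ | 0 < z.re} := by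
    apply (BlPart.FF_diff hμpos hs).mul
    apply DifferentiableOn.inv
    · exact (((differentiable_const (1:ℂ)).add differentiable_id).pow 2).differentiableOn
    · intro z hz
      exact pow_ne_zero 2 (hne1 z (le_of_lt hz))
  have hGb : ∀ z : ℂ, 0 ≤ z.re → ‖GG z‖ ≤ (1 + z.im ^ 2)⁻¹ := by
    intro z hz
    rw [hGG]
    show ‖BlPart.FF lam z * ((1 + z) ^ 2)⁻¹‖ ≤ _
    rw [norm_mul, norm_inv, norm_pow]
    have hn : ‖1 + z‖ ^ 2 = (1 + z.re) ^ 2 + z.im ^ 2 := by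
      rw [Complex.sq_norm, Complex.normSq_apply]
      simp only [Complex.add_re, Complex.add_im, Complex.one_re, Complex.one_im, add_zero]
      ring
    rw [hn]
    have h1 : (1 + z.im ^ 2 : ℝ) ≤ (1 + z.re) ^ 2 + z.im ^ 2 := by nlinarith
    have h2 : (0:ℝ) < 1 + z.im ^ 2 := by positivity
    calc ‖BlPart.FF lam z‖ * ((1 + z.re) ^ 2 + z.im ^ 2)⁻¹
        ≤ 1 * (1 + z.im ^ 2)⁻¹ := by
          apply mul_le_mul (BlPart.norm_FF_le hμpos hs hz) ?_ (by positivity) one_pos.le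
          exact inv_anti₀ h2 h1
      _ = (1 + z.im ^ 2)⁻¹ := one_mul _
  -- the counterexample function
  set f : ℝ → ℂ := LapAux.fInv GG with hf
  have hfcont : Continuous f := LapAux.fInv_cont hGd hGb
  have hasLap : ∀ l : ℂ, 0 < l.re → HasLaplace f l (GG l) := by
    intro l hl
    exact LapAux.tendsto_lap_fInv hGd hGb hl
  have hloc : MeasureTheory.LocallyIntegrableOn f (Set.Ici 0) :=
    hfcont.locallyIntegrable.locallyIntegrableOn _
  have habs : ∀ k, laplaceAbs f < (((lam k).re : ℝ) : EReal) := by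
    intro k
    have hmem : ((δ / 2 : ℝ) : EReal) ∈
        {x : EReal | ∃ ω : ℝ, x = (ω : EReal) ∧ ∀ l : ℂ, ω < l.re → ∃ F, HasLaplace f l F} := by
      refine ⟨δ / 2, rfl, fun l hl => ⟨GG l, hasLap l (by linarith)⟩⟩
    have hle : laplaceAbs f ≤ ((δ / 2 : ℝ) : EReal) := sInf_le hmem
    refine lt_of_le_of_lt hle ?_
    have : (δ / 2 : ℝ) < (lam k).re := by linarith [hre k]
    exact_mod_cast this
  have h0 : ∀ k, HasLaplace f (lam k) 0 := by
    intro k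
    have h1 := hasLap (lam k) (hμpos k)
    have h2 : GG (lam k) = 0 := by
      rw [hGG]
      show BlPart.FF lam (lam k) * ((1 + lam k) ^ 2)⁻¹ = 0
      rw [BlPart.FF_zero hμpos hs k, zero_mul]
    rwa [h2] at h1
  have hae := hU f hloc habs h0
  -- contradiction via the point x
  have hxre : (0:ℝ) < ((x : ℂ)).re := by simpa using hxpos
  have hzero : HasLaplace f ((x : ℂ)) 0 := by
    have heq : lapPartial f ((x : ℂ)) = fun _ => 0 := by
      funext T
      rw [lapPartial]
      apply MeasureTheory.integral_eq_zero_of_ae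
      have h1 : ∀ᵐ t ∂(MeasureTheory.volume.restrict (Set.Ioc (0:ℝ) T)),
          (0:ℝ) ≤ t → f t = 0 := MeasureTheory.ae_restrict_of_ae hae
      have h2 : ∀ᵐ t ∂(MeasureTheory.volume.restrict (Set.Ioc (0:ℝ) T)),
          t ∈ Set.Ioc (0:ℝ) T := MeasureTheory.ae_restrict_mem measurableSet_Ioc
      filter_upwards [h1, h2] with t ht hmem
      simp [ht hmem.1.le]
    rw [HasLaplace, heq]
    exact tendsto_const_nhds
  have hGx : GG ((x : ℂ)) = 0 := tendsto_nhds_unique (hasLap _ hxre) hzero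
  have hFFlow : (1:ℝ)/2 ≤ ‖BlPart.FF lam ((x : ℂ))‖ :=
    BlPart.norm_FF_lower hμpos hs hxpos hhalf
  have hFFne : BlPart.FF lam ((x : ℂ)) ≠ 0 := by
    intro h
    rw [h] at hFFlow
    norm_num at hFFlow
  have hGne : GG ((x : ℂ)) ≠ 0 := by
    rw [hGG]
    show BlPart.FF lam ((x:ℂ)) * (((1 + (x:ℂ)) ^ 2)⁻¹) ≠ 0
    exact mul_ne_zero hFFne (inv_ne_zero (pow_ne_zero 2 (hne1 _ (by simpa using hxpos.le))))
  exact hGne hGx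


end
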